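/- For an integer k ≥ 1, a real A > 0 and a real x > 0, define V(x) := (1/(2π))·∫_ℝ (2π)^{−(A+it)}·(Γ(A+it+k)/Γ(k))·x^{−(A+it)}·e^{(A+it)²}·(A+it)^{−1} dt (the vertical-line integral defining the approximate-functional-equation weight on the line Re(s) = A). Then for each A > 0 the defining integral converges absolutely, and there is a constant C = C(A) > 0 such that |V(x)| ≤ C·(k/x)^A for all integers k ≥ 1 and all real x > 0. -/

import Mathlib

open MeasureTheory

lemma abs_Gamma_le_Gamma_re {z : ℂ} (hz : 0 < z.re) :
    ‖Complex.Gamma z‖ ≤ Real.Gamma z.re := by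
  rw [Complex.Gamma_eq_integral hz, Real.Gamma_eq_integral hz,
    Complex.GammaIntegral]
  refine (norm_integral_le_integral_norm _).trans ?_
  refine le_of_eq (setIntegral_congr_fun measurableSet_Ioi fun x hx => ?_)
  rw [norm_mul,
    Complex.norm_cpow_eq_rpow_re_of_pos hx, Complex.norm_real, Real.norm_eq_abs, abs_of_nonneg (Real.exp_pos _).le,
    Complex.sub_re, Complex.one_re]

lemma Gamma_add_nat_le (n : ℕ) : ∀ y : ℝ, 1 ≤ y →
    Real.Gamma (y + n) ≤ (y + n) ^ n * Real.Gamma y := by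
  induction n with
  | zero => intro y hy; simp
  | succ n ih =>
    intro y hy
    have hy0 : (0:ℝ) < y := lt_of_lt_of_le one_pos hy
    have h1 : (y + ((n:ℕ)+1:ℕ) : ℝ) = (y + n) + 1 := by push_cast; ring
    have h2 : Real.Gamma ((y + n) + 1) = (y + n) * Real.Gamma (y + n) :=
      Real.Gamma_add_one (by positivity)
    rw [h1, h2]
    calc (y + n) * Real.Gamma (y + n) ≤ (y + n) * ((y + n) ^ n * Real.Gamma y) := by
          apply mul_le_mul_of_nonneg_left (ih y hy) (by positivity)
      _ = (y + n) ^ (n+1) * Real.Gamma y := by ring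
      _ ≤ (y + n + 1) ^ (n+1) * Real.Gamma y := by
          apply mul_le_mul_of_nonneg_right _ (Real.Gamma_pos_of_pos hy0).le
          apply pow_le_pow_left₀ (by positivity) (by linarith)

lemma Gamma_ratio_le (A : ℝ) (hA : 0 < A) :
    ∀ k : ℕ, 1 ≤ k → Real.Gamma (A + k) ≤
      ((⌊A⌋₊ + 1 + 1 : ℝ)) ^ A * (k : ℝ) ^ A * Real.Gamma k := by
  intro k hk
  set n : ℕ := ⌊A⌋₊ + 1 with hn
  have hAn : A < n := by exact_mod_cast Nat.lt_floor_add_one A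
  have hn0 : (0:ℝ) < n := lt_trans hA hAn
  set a : ℝ := A / n with ha
  have ha0 : 0 < a := div_pos hA hn0
  have ha1 : a < 1 := (div_lt_one hn0).mpr hAn
  have hb0 : 0 < 1 - a := by linarith
  have hk1 : (1:ℝ) ≤ k := by exact_mod_cast hk
  have hk0 : (0:ℝ) < k := lt_of_lt_of_le one_pos hk1
  have hGk : 0 < Real.Gamma k := Real.Gamma_pos_of_pos hk0
  have key : Real.Gamma (A + k) ≤ Real.Gamma ((k:ℝ) + n) ^ a * Real.Gamma k ^ (1 - a) := by
    have := Real.Gamma_mul_add_mul_le_rpow_Gamma_mul_rpow_Gamma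
      (s := (k:ℝ) + n) (t := (k:ℝ)) (a := a) (b := 1 - a)
      (by positivity) hk0 ha0 hb0 (by ring)
    have harg : a * ((k:ℝ) + n) + (1 - a) * k = A + k := by
      have hna : (n:ℝ) * a = A := by rw [ha, mul_div_assoc', mul_div_cancel_left₀ A hn0.ne']
      linear_combination hna
    rwa [harg] at this
  have h2 : Real.Gamma ((k:ℝ) + n) ≤ ((k:ℝ) + n) ^ (n:ℕ) * Real.Gamma k :=
    Gamma_add_nat_le n k hk1
  have h3 : Real.Gamma ((k:ℝ) + n) ^ a ≤ (((k:ℝ) + n) ^ (n:ℕ) * Real.Gamma k) ^ a :=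
    Real.rpow_le_rpow (Real.Gamma_pos_of_pos (by positivity)).le h2 ha0.le
  have h4 : (((k:ℝ) + n) ^ (n:ℕ) * Real.Gamma k) ^ a = ((k:ℝ) + n) ^ A * Real.Gamma k ^ a := by
    rw [Real.mul_rpow (by positivity) hGk.le, ← Real.rpow_natCast ((k:ℝ) + n) n,
      ← Real.rpow_mul (by positivity)]
    congr 2
    rw [ha, mul_div_assoc', mul_div_cancel_left₀ A hn0.ne']
  have h5 : Real.Gamma (A + k) ≤ ((k:ℝ) + n) ^ A * Real.Gamma k := by
    calc Real.Gamma (A + k) ≤ Real.Gamma ((k:ℝ) + n) ^ a * Real.Gamma k ^ (1 - a) := key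
      _ ≤ (((k:ℝ) + n) ^ (n:ℕ) * Real.Gamma k) ^ a * Real.Gamma k ^ (1 - a) := by
          exact mul_le_mul_of_nonneg_right h3 (Real.rpow_nonneg hGk.le _)
      _ = ((k:ℝ) + n) ^ A * (Real.Gamma k ^ a * Real.Gamma k ^ (1 - a)) := by rw [h4]; ring
      _ = ((k:ℝ) + n) ^ A * Real.Gamma k := by
          rw [← Real.rpow_add hGk]; norm_num
  refine h5.trans ?_
  have h6 : ((k:ℝ) + n) ≤ ((n:ℝ) + 1) * k := by nlinarith
  have h7 : ((k:ℝ) + n) ^ A ≤ (((n:ℝ) + 1) * k) ^ A :=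
    Real.rpow_le_rpow (by positivity) h6 hA.le
  rw [Real.mul_rpow (by positivity) hk0.le] at h7
  have : ((n:ℝ) + 1) = ((⌊A⌋₊ : ℝ) + 1 + 1) := by push_cast [hn]; ring
  rw [this] at h7
  exact mul_le_mul_of_nonneg_right h7 hGk.le


/-- The integrand of the vertical-line integral defining the weight `V_k` on the line
`Re(s) = A`: `(2π)^{−(A+it)} (Γ(A+it+k)/Γ(k)) x^{−(A+it)} e^{(A+it)²} (A+it)^{−1}`,
where `y^w := exp(w log y)` for `y > 0`. -/
noncomputable def Vintegrand (k : ℕ) (A x t : ℝ) : ℂ :=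
  Complex.exp (-(((A : ℂ) + (t : ℂ) * Complex.I)) * ((Real.log (2 * Real.pi) : ℝ) : ℂ)) *
    (Complex.Gamma (((A : ℂ) + (t : ℂ) * Complex.I) + (k : ℂ)) / Complex.Gamma (k : ℂ)) *
    Complex.exp (-(((A : ℂ) + (t : ℂ) * Complex.I)) * ((Real.log x : ℝ) : ℂ)) *
    Complex.exp (((A : ℂ) + (t : ℂ) * Complex.I) ^ 2) *
    (((A : ℂ) + (t : ℂ) * Complex.I))⁻¹

lemma norm_Vintegrand_le (k : ℕ) (hk : 1 ≤ k) (A x t : ℝ) (hA : 0 < A) :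
    ‖Vintegrand k A x t‖ ≤
      (Real.exp (-(A * Real.log (2 * Real.pi))) * (Real.Gamma (A + k) / Real.Gamma k) *
        Real.exp (-(A * Real.log x)) * Real.exp (A ^ 2) * A⁻¹) * Real.exp (-t ^ 2) := by
  have hk0 : (0:ℝ) < k := by exact_mod_cast hk
  have hGk : 0 < Real.Gamma k := Real.Gamma_pos_of_pos hk0
  set s : ℂ := (A : ℂ) + (t : ℂ) * Complex.I with hs
  have hsre : s.re = A := by simp [hs]
  have hsim : s.im = t := by simp [hs]
  have h1 : ‖Complex.exp (-s * ((Real.log (2 * Real.pi) : ℝ) : ℂ))‖ =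
      Real.exp (-(A * Real.log (2 * Real.pi))) := by
    rw [Complex.norm_exp]
    congr 1
    simp [Complex.mul_re, hsre, hsim]
  have h2 : ‖Complex.exp (-s * ((Real.log x : ℝ) : ℂ))‖ = Real.exp (-(A * Real.log x)) := by
    rw [Complex.norm_exp]
    congr 1
    simp [Complex.mul_re, hsre, hsim]
  have h3 : ‖Complex.exp (s ^ 2)‖ = Real.exp (A ^ 2 - t ^ 2) := by
    rw [Complex.norm_exp]
    congr 1
    rw [sq, Complex.mul_re, hsre, hsim]
    ring
  have h4 : ‖Complex.Gamma ((k:ℂ))‖ = Real.Gamma k := by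
    rw [show ((k:ℂ)) = (((k:ℝ)):ℂ) by push_cast; ring, Complex.Gamma_ofReal,
      Complex.norm_real, Real.norm_eq_abs, abs_of_pos hGk]
  have h5 : ‖Complex.Gamma (s + (k:ℂ))‖ ≤ Real.Gamma (A + k) := by
    have hre : (s + (k:ℂ)).re = A + k := by simp [hsre]
    have := abs_Gamma_le_Gamma_re (z := s + (k:ℂ)) (by rw [hre]; positivity)
    rwa [hre] at this
  have h6 : ‖s⁻¹‖ ≤ A⁻¹ := by
    rw [norm_inv]
    apply inv_anti₀ hA
    calc A = |s.re| := by rw [hsre, abs_of_pos hA]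
      _ ≤ ‖s‖ := Complex.abs_re_le_norm s
      _ = ‖s‖ := rfl
  rw [Vintegrand]
  simp only [norm_mul, norm_div]
  rw [← hs, h1, h2, h3, h4]
  have key : ‖Complex.Gamma (s + (k:ℂ))‖ / Real.Gamma k * ‖s⁻¹‖ ≤
      (Real.Gamma (A + k) / Real.Gamma k) * A⁻¹ := by
    apply mul_le_mul (by gcongr) h6 (norm_nonneg _) (by positivity)
  calc Real.exp (-(A * Real.log (2 * Real.pi))) * (‖Complex.Gamma (s + (k:ℂ))‖ / Real.Gamma k) *
        Real.exp (-(A * Real.log x)) * Real.exp (A ^ 2 - t ^ 2) * ‖s⁻¹‖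
      ≤ Real.exp (-(A * Real.log (2 * Real.pi))) * (Real.Gamma (A + k) / Real.Gamma k) *
        Real.exp (-(A * Real.log x)) * Real.exp (A ^ 2 - t ^ 2) * A⁻¹ := by
        have e1 := mul_le_mul_of_nonneg_left key
          (a := Real.exp (-(A * Real.log (2 * Real.pi))) * Real.exp (-(A * Real.log x)) *
            Real.exp (A ^ 2 - t ^ 2)) (by positivity)
        nlinarith [e1]
    _ = (Real.exp (-(A * Real.log (2 * Real.pi))) * (Real.Gamma (A + k) / Real.Gamma k) *
        Real.exp (-(A * Real.log x)) * Real.exp (A ^ 2) * A⁻¹) * Real.exp (-t ^ 2) := by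
        rw [show A ^ 2 - t ^ 2 = A ^ 2 + (-t^2) by ring, Real.exp_add]
        ring

lemma continuous_Vintegrand (k : ℕ) (hk : 1 ≤ k) (A x : ℝ) (hA : 0 < A) :
    Continuous (fun t : ℝ => Vintegrand k A x t) := by
  have hk0 : (0:ℝ) < k := by exact_mod_cast hk
  have hs : Continuous (fun t : ℝ => (A : ℂ) + (t : ℂ) * Complex.I) := by continuity
  have hre : ∀ t : ℝ, ((A : ℂ) + (t : ℂ) * Complex.I).re = A := by intro t; simp
  have hne : ∀ t : ℝ, ((A : ℂ) + (t : ℂ) * Complex.I) ≠ 0 := by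
    intro t h
    have := congrArg Complex.re h
    rw [hre t] at this
    simp at this; linarith
  have hGamma : Continuous (fun t : ℝ =>
      Complex.Gamma (((A : ℂ) + (t : ℂ) * Complex.I) + (k : ℂ))) := by
    rw [continuous_iff_continuousAt]
    intro t
    apply ContinuousAt.comp _ ((hs.add continuous_const).continuousAt)
    apply (Complex.differentiableAt_Gamma _ ?_).continuousAt
    intro m h
    have := congrArg Complex.re h
    simp [hre] at this
    have : A = -(m:ℝ) - k := by linarith
    have hm : (0:ℝ) ≤ m := Nat.cast_nonneg m
    nlinarith
  apply Continuous.mul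
  apply Continuous.mul
  apply Continuous.mul
  apply Continuous.mul
  · exact Complex.continuous_exp.comp (by continuity)
  · exact hGamma.div_const _
  · exact Complex.continuous_exp.comp (by continuity)
  · exact Complex.continuous_exp.comp (by continuity)
  · exact hs.inv₀ hne

/-- The integral defining `V_k(x)` converges absolutely and satisfies
`|V_k(x)| ≤ C (k/x)^A` uniformly in `k ≥ 1` and `x > 0`. -/
theorem V_weight_bound (A : ℝ) (hA : 0 < A) :
    (∀ k : ℕ, 1 ≤ k → ∀ x : ℝ, 0 < x →
      Integrable (fun t : ℝ => Vintegrand k A x t)) ∧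
    ∃ C : ℝ, 0 < C ∧ ∀ k : ℕ, 1 ≤ k → ∀ x : ℝ, 0 < x →
      ‖(1 / (2 * (Real.pi : ℂ))) * ∫ t : ℝ, Vintegrand k A x t‖
        ≤ C * ((k : ℝ) / x) ^ A := by
  have hgauss : Integrable (fun t : ℝ => Real.exp (-t ^ 2)) := by
    have := integrable_exp_neg_mul_sq (b := (1:ℝ)) one_pos
    simpa using this
  have hint : ∀ k : ℕ, 1 ≤ k → ∀ x : ℝ, 0 < x →
      Integrable (fun t : ℝ => Vintegrand k A x t) := by
    intro k hk x hx
    set B : ℝ := Real.exp (-(A * Real.log (2 * Real.pi))) *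
      (Real.Gamma (A + k) / Real.Gamma k) * Real.exp (-(A * Real.log x)) *
      Real.exp (A ^ 2) * A⁻¹ with hB
    refine Integrable.mono' (hgauss.const_mul B)
      (continuous_Vintegrand k hk A x hA).aestronglyMeasurable ?_
    filter_upwards with t
    exact norm_Vintegrand_le k hk A x t hA
  refine ⟨hint, ?_⟩
  set D : ℝ := ((⌊A⌋₊ : ℝ) + 1 + 1) ^ A with hD
  have hDpos : 0 < D := by positivity
  refine ⟨(2 * Real.pi)⁻¹ * Real.exp (-(A * Real.log (2 * Real.pi))) * D *
    Real.exp (A ^ 2) * A⁻¹ * Real.sqrt Real.pi, by positivity, ?_⟩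
  intro k hk x hx
  have hk0 : (0:ℝ) < k := by exact_mod_cast hk
  have hGk : 0 < Real.Gamma k := Real.Gamma_pos_of_pos hk0
  set B : ℝ := Real.exp (-(A * Real.log (2 * Real.pi))) *
    (Real.Gamma (A + k) / Real.Gamma k) * Real.exp (-(A * Real.log x)) *
    Real.exp (A ^ 2) * A⁻¹ with hB
  have hnorm_int : ‖∫ t : ℝ, Vintegrand k A x t‖ ≤ B * Real.sqrt Real.pi := by
    have h1 : ‖∫ t : ℝ, Vintegrand k A x t‖ ≤ ∫ t : ℝ, B * Real.exp (-t ^ 2) := by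
      apply norm_integral_le_of_norm_le (hgauss.const_mul B)
      filter_upwards with t
      exact norm_Vintegrand_le k hk A x t hA
    refine h1.trans_eq ?_
    rw [integral_const_mul]
    congr 1
    have := integral_gaussian (1:ℝ)
    simpa using this
  have habs : ‖(1 / (2 * (Real.pi : ℂ))) * ∫ t : ℝ, Vintegrand k A x t‖ =
      (2 * Real.pi)⁻¹ * ‖∫ t : ℝ, Vintegrand k A x t‖ := by
    rw [norm_mul]
    congr 1
    rw [show (2 * (Real.pi : ℂ)) = ((2 * Real.pi : ℝ) : ℂ) by push_cast; ring]
    rw [norm_div, norm_one, Complex.norm_real, Real.norm_eq_abs, abs_of_pos (by positivity), one_div]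
  rw [habs]
  have step1 : (2 * Real.pi)⁻¹ * ‖∫ t : ℝ, Vintegrand k A x t‖ ≤
      (2 * Real.pi)⁻¹ * (B * Real.sqrt Real.pi) := by
    apply mul_le_mul_of_nonneg_left hnorm_int (by positivity)
  refine step1.trans ?_
  -- bound B
  have hGle : Real.Gamma (A + k) / Real.Gamma k ≤ D * (k:ℝ) ^ A := by
    rw [div_le_iff₀ hGk]
    calc Real.Gamma (A + k) ≤ D * (k:ℝ) ^ A * Real.Gamma k := Gamma_ratio_le A hA k hk
      _ = D * (k:ℝ) ^ A * Real.Gamma k := by ring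
  have hE2 : Real.exp (-(A * Real.log x)) = x ^ (-A) := by
    rw [Real.rpow_def_of_pos hx]
    ring_nf
  have hkx : (k:ℝ) ^ A * x ^ (-A) = ((k:ℝ) / x) ^ A := by
    rw [Real.rpow_neg hx.le, Real.div_rpow (Nat.cast_nonneg k) hx.le, div_eq_mul_inv]
  have hBle : B ≤ Real.exp (-(A * Real.log (2 * Real.pi))) * (D * ((k:ℝ)/x) ^ A) *
      Real.exp (A ^ 2) * A⁻¹ := by
    rw [hB, hE2]
    calc Real.exp (-(A * Real.log (2 * Real.pi))) * (Real.Gamma (A + k) / Real.Gamma k) *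
          x ^ (-A) * Real.exp (A ^ 2) * A⁻¹
        ≤ Real.exp (-(A * Real.log (2 * Real.pi))) * (D * (k:ℝ) ^ A) *
          x ^ (-A) * Real.exp (A ^ 2) * A⁻¹ := by
          gcongr
      _ = Real.exp (-(A * Real.log (2 * Real.pi))) * (D * ((k:ℝ) ^ A * x ^ (-A))) *
          Real.exp (A ^ 2) * A⁻¹ := by ring
      _ = _ := by rw [hkx]
  calc (2 * Real.pi)⁻¹ * (B * Real.sqrt Real.pi)
      ≤ (2 * Real.pi)⁻¹ * ((Real.exp (-(A * Real.log (2 * Real.pi))) * (D * ((k:ℝ)/x) ^ A) *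
        Real.exp (A ^ 2) * A⁻¹) * Real.sqrt Real.pi) := by
        apply mul_le_mul_of_nonneg_left (mul_le_mul_of_nonneg_right hBle (by positivity))
          (by positivity)
    _ = ((2 * Real.pi)⁻¹ * Real.exp (-(A * Real.log (2 * Real.pi))) * D *
        Real.exp (A ^ 2) * A⁻¹ * Real.sqrt Real.pi) * ((k:ℝ)/x) ^ A := by ring
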